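/- Let f be a probability density with support [a,∞), differentiable on (a,∞), with λ_f := sup_{y>a}(-f'(y)/f(y)) ∈ (0,∞). Fix λ ≥ λ_f, let E be exponential with rate λ, and let Z be an independent random variable with distribution G(x) = F(x) + f(x)/λ. Then E + Z has density f, i.e., if ξ has density f, then ξ is equal in distribution to E + Z. -/

import Mathlib

open MeasureTheory ProbabilityTheory Set Filter Topology

/-- With `f ∈ H`, `λ ≥ λ_f`, `E ~ Exp(λ)` independent of `Z ~ G`
where `G x = F x + f x / λ`, the sum `E + Z` has density `f`, i.e. it is equal
in distribution to a random variable `ξ` with density `f`. -/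
theorem stmt1
    {Ω : Type*} [MeasureSpace Ω] (P : Measure Ω) [IsProbabilityMeasure P]
    (f : ℝ → ℝ) (a lamf lam : ℝ)
    (hf_nonneg : ∀ x, 0 ≤ f x)
    (hf_int : ∫ x, f x = 1)
    (hf_integrable : Integrable f)
    (hf_supp : ∀ x < a, f x = 0)
    (hf_diff : ∀ x ∈ Ioi a, DifferentiableAt ℝ f x)
    (hlamf : IsLUB {r : ℝ | ∃ y ∈ Ioi a, r = -deriv f y / f y} lamf)
    (hlamf_pos : 0 < lamf)
    (hlam : lamf ≤ lam)
    (F G : ℝ → ℝ)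
    (hF : ∀ x, F x = ∫ y in Iic x, f y)
    (hG : ∀ x, G x = F x + f x / lam)
    (E Z : Ω → ℝ)
    (hE_meas : Measurable E) (hZ_meas : Measurable Z)
    (hEZ_indep : IndepFun E Z P)
    (hE_law : Measure.map E P = expMeasure lam)
    (hZ_law : ∀ x, (Measure.map Z P (Iic x)) = ENNReal.ofReal (G x)) :
    Measure.map (fun ω => E ω + Z ω) P
      = volume.withDensity (fun x => ENNReal.ofReal (f x)) := by
  have hlam_pos : 0 < lam := lt_of_lt_of_le hlamf_pos hlam
  have hlam_ne : lam ≠ 0 := ne_of_gt hlam_pos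
  -- a.e. every point differs from `a`
  have h_ne_a : ∀ᵐ y : ℝ, y ≠ a := by
    rw [ae_iff]
    simp only [ne_eq, not_not, setOf_eq_eq_singleton]
    exact measure_singleton a
  have hf0ae : ∀ s : ℝ, s ≤ a → (∀ᵐ y ∂(volume.restrict (Iic s)), f y = 0) := by
    intro s hs
    filter_upwards [ae_restrict_mem measurableSet_Iic, ae_restrict_of_ae h_ne_a] with y hy hya
    exact hf_supp y (lt_of_le_of_ne (hy.trans hs) hya)
  have hF0 : ∀ s : ℝ, s ≤ a → F s = 0 := by
    intro s hs
    rw [hF]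
    exact integral_eq_zero_of_ae (hf0ae s hs)
  have hF_nonneg : ∀ x, 0 ≤ F x := by
    intro x
    rw [hF]
    exact integral_nonneg fun y => hf_nonneg y
  have hF_le_one : ∀ x, F x ≤ 1 := by
    intro x
    rw [hF, ← hf_int]
    exact setIntegral_le_integral hf_integrable (ae_of_all _ fun y => hf_nonneg y)
  have hG_nonneg : ∀ x, 0 ≤ G x := by
    intro x
    rw [hG]
    have := hf_nonneg x
    have := hF_nonneg x
    positivity
  have hG0 : ∀ s, s < a → G s = 0 := by
    intro s hs
    rw [hG, hF0 s hs.le, hf_supp s hs]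
    simp
  have hFrepr : ∀ u, F u = F a + ∫ t in a..u, f t := by
    intro u
    rw [hF u, hF a,
      ← intervalIntegral.integral_Iic_sub_Iic hf_integrable.integrableOn
        hf_integrable.integrableOn]
    ring
  have hF_cont : Continuous F := by
    have h : Continuous fun u : ℝ => F a + ∫ t in a..u, f t :=
      continuous_const.add (hf_integrable.continuous_primitive a)
    exact h.congr fun u => (hFrepr u).symm
  have hF_deriv : ∀ s, a < s → HasDerivAt F (f s) s := by
    intro s hs
    have hsm : StronglyMeasurableAtFilter f (𝓝 s) volume :=
      ⟨Ioi a, Ioi_mem_nhds hs,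
        ContinuousOn.aestronglyMeasurable
          (fun y hy => ((hf_diff y hy).continuousAt).continuousWithinAt) measurableSet_Ioi⟩
    have hd := intervalIntegral.integral_hasDerivAt_right
      (hf_integrable.intervalIntegrable (a := a) (b := s)) hsm (hf_diff s hs).continuousAt
    have hrepr : F = fun u => F a + ∫ t in a..u, f t := funext hFrepr
    rw [hrepr]
    exact hd.const_add (F a)
  -- the key integrand
  set w : ℝ → ℝ := fun s => lam * Real.exp (lam * s) * G s with hw_def
  have hw_eq : ∀ s, w s = lam * Real.exp (lam * s) * F s + Real.exp (lam * s) * f s := by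
    intro s
    show lam * Real.exp (lam * s) * G s = _
    rw [hG]
    field_simp
  have hw_deriv : ∀ s, a < s →
      HasDerivAt (fun u => Real.exp (lam * u) * F u) (w s) s := by
    intro s hs
    have h1 : HasDerivAt (fun u : ℝ => lam * u) lam s := by
      simpa using (hasDerivAt_id s).const_mul lam
    have he : HasDerivAt (fun u => Real.exp (lam * u)) (Real.exp (lam * s) * lam) s :=
      (Real.hasDerivAt_exp (lam * s)).comp s h1
    have hm := he.mul (hF_deriv s hs)
    rw [hw_eq s]
    exact hm.congr_deriv (by ring)
  have hexp_cont : Continuous fun u : ℝ => Real.exp (lam * u) :=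
    Real.continuous_exp.comp (continuous_const.mul continuous_id)
  have hw_ii : ∀ x, IntervalIntegrable w volume a x := by
    intro x
    have h1 : IntervalIntegrable (fun s => lam * Real.exp (lam * s) * F s) volume a x :=
      ((continuous_const.mul hexp_cont).mul hF_cont).intervalIntegrable a x
    have h2 : IntervalIntegrable (fun s => Real.exp (lam * s) * f s) volume a x :=
      (hf_integrable.intervalIntegrable).continuousOn_mul hexp_cont.continuousOn
    have hfun : w = fun s => lam * Real.exp (lam * s) * F s + Real.exp (lam * s) * f s :=
      funext hw_eq
    rw [hfun]
    exact h1.add h2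
  have hw0 : ∀ s, s ≤ a → (∀ᵐ y ∂(volume.restrict (Iic s)), w y = 0) := by
    intro s hs
    filter_upwards [ae_restrict_mem measurableSet_Iic, ae_restrict_of_ae h_ne_a] with y hy hya
    show lam * Real.exp (lam * y) * G y = 0
    rw [hG0 y (lt_of_le_of_ne (hy.trans hs) hya), mul_zero]
  have hw_int_Iic : ∀ x, IntegrableOn w (Iic x) volume := by
    intro x
    rcases le_total x a with hx | hx
    · exact (integrable_zero _ _ _).congr ((hw0 x hx).mono fun y h => h.symm)
    · have h1 : IntegrableOn w (Iic a) volume :=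
        (integrable_zero _ _ _).congr ((hw0 a le_rfl).mono fun y h => h.symm)
      have h2 : IntegrableOn w (Ioc a x) volume := (hw_ii x).1
      have h3 := h1.union h2
      rwa [Iic_union_Ioc_eq_Iic hx] at h3
  have hI : ∀ x, ∫ s in Iic x, w s = Real.exp (lam * x) * F x := by
    intro x
    rcases le_total x a with hx | hx
    · rw [integral_eq_zero_of_ae (hw0 x hx), hF0 x hx, mul_zero]
    · have hftc : ∫ s in a..x, w s
          = Real.exp (lam * x) * F x - Real.exp (lam * a) * F a := by
        apply intervalIntegral.integral_eq_sub_of_hasDeriv_right_of_le hx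
        · exact (hexp_cont.mul hF_cont).continuousOn
        · intro s hs
          exact (hw_deriv s hs.1).hasDerivWithinAt
        · exact hw_ii x
      have hsplit := intervalIntegral.integral_Iic_sub_Iic (hw_int_Iic a) (hw_int_Iic x)
      have hIa : ∫ s in Iic a, w s = 0 := integral_eq_zero_of_ae (hw0 a le_rfl)
      rw [hIa, sub_zero] at hsplit
      rw [hsplit, hftc, hF0 a le_rfl, mul_zero, sub_zero]
  -- facts about the exponential pdf
  have hpdfR : ∀ t, exponentialPDFReal lam t
      = if 0 ≤ t then lam * Real.exp (-(lam * t)) else 0 := by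
    intro t
    rw [exponentialPDFReal, gammaPDFReal]
    simp only [Real.rpow_one, Real.Gamma_one, div_one, sub_self, Real.rpow_zero, mul_one,
      pow_one]
  have hpdf_nonneg : ∀ t, 0 ≤ exponentialPDFReal lam t :=
    exponentialPDFReal_nonneg hlam_pos
  have hpdf_le : ∀ t, ‖exponentialPDFReal lam t‖ ≤ lam := by
    intro t
    rw [Real.norm_eq_abs, abs_of_nonneg (hpdf_nonneg t), hpdfR t]
    split_ifs with h
    · have hexp1 : Real.exp (-(lam * t)) ≤ 1 :=
        Real.exp_le_one_iff.mpr (neg_nonpos.mpr (mul_nonneg hlam_pos.le h))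
      calc lam * Real.exp (-(lam * t)) ≤ lam * 1 :=
            mul_le_mul_of_nonneg_left hexp1 hlam_pos.le
        _ = lam := mul_one lam
    · exact hlam_pos.le
  have hpdf_int : Integrable (exponentialPDFReal lam) := by
    have heq : exponentialPDFReal lam
        = (Ici (0:ℝ)).indicator (fun t => lam * Real.exp (-(lam * t))) := by
      funext t
      by_cases h : 0 ≤ t <;> simp [Set.indicator_apply, hpdfR t, mem_Ici, h]
    rw [heq, integrable_indicator_iff measurableSet_Ici]
    have h1 : IntegrableOn (fun t : ℝ => Real.exp (-lam * t)) (Ioi (0:ℝ)) volume :=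
      exp_neg_integrableOn_Ioi 0 hlam_pos
    have h2 : IntegrableOn (fun t : ℝ => lam * Real.exp (-(lam * t))) (Ioi (0:ℝ)) volume := by
      have h3 := h1.const_mul lam
      simp only [neg_mul] at h3
      exact h3
    rwa [integrableOn_Ici_iff_integrableOn_Ioi]
  -- integrability of the convolution integrand
  have hInt : ∀ x, Integrable (fun t => exponentialPDFReal lam t * G (x - t)) := by
    intro x
    have h1 : Integrable (fun t => exponentialPDFReal lam t * F (x - t)) := by
      have hcomp : Continuous fun t : ℝ => F (x - t) :=
        hF_cont.comp (continuous_const.sub continuous_id)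
      have hb := hpdf_int.bdd_mul (c := 1) hcomp.aestronglyMeasurable
        (ae_of_all _ fun t => by
          rw [Real.norm_eq_abs, abs_of_nonneg (hF_nonneg _)]
          exact hF_le_one _)
      exact hb.congr (ae_of_all _ fun t => mul_comm _ _)
    have h2 : Integrable (fun t => exponentialPDFReal lam t * (f (x - t) / lam)) := by
      have hg : Integrable (fun t => f (x - t) / lam) :=
        (hf_integrable.comp_sub_left x).div_const lam
      exact hg.bdd_mul hpdf_int.aestronglyMeasurable (ae_of_all _ hpdf_le)
    exact (h1.add h2).congr (ae_of_all _ fun t => by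
      simp only [Pi.add_apply]
      rw [hG]
      ring)
  -- the real convolution integral equals F x
  have hreal : ∀ x, (∫ t, exponentialPDFReal lam t * G (x - t)) = F x := by
    intro x
    have hsub : (∫ t, exponentialPDFReal lam t * G (x - t))
        = ∫ s, exponentialPDFReal lam (x - s) * G s := by
      have h := integral_sub_left_eq_self
        (fun s => exponentialPDFReal lam (x - s) * G s) volume x
      simpa [sub_sub_cancel] using h
    have hind : (fun s => exponentialPDFReal lam (x - s) * G s)
        = (Iic x).indicator (fun s => lam * Real.exp (-(lam * (x - s))) * G s) := by
      funext s
      rw [hpdfR (x - s)]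
      by_cases h : s ≤ x
      · rw [if_pos (by linarith), indicator_of_mem (mem_Iic.mpr h)]
      · rw [if_neg (by push_neg at h ⊢; linarith), indicator_of_notMem (by simpa using h),
          zero_mul]
    have hpull : ∀ s, lam * Real.exp (-(lam * (x - s))) * G s
        = Real.exp (-(lam * x)) * w s := by
      intro s
      show _ = Real.exp (-(lam * x)) * (lam * Real.exp (lam * s) * G s)
      rw [show -(lam * (x - s)) = -(lam * x) + lam * s by ring, Real.exp_add]
      ring
    rw [hsub, hind, integral_indicator measurableSet_Iic]
    calc (∫ s in Iic x, lam * Real.exp (-(lam * (x - s))) * G s)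
        = ∫ s in Iic x, Real.exp (-(lam * x)) * w s := by
          exact integral_congr_ae (ae_of_all _ fun s => hpull s)
      _ = Real.exp (-(lam * x)) * ∫ s in Iic x, w s := integral_const_mul _ _
      _ = Real.exp (-(lam * x)) * (Real.exp (lam * x) * F x) := by rw [hI x]
      _ = F x := by
          rw [← mul_assoc, ← Real.exp_add, neg_add_cancel, Real.exp_zero, one_mul]
  -- measure-theoretic computation
  haveI hPE : IsProbabilityMeasure (Measure.map E P) :=
    Measure.isProbabilityMeasure_map hE_meas.aemeasurable
  haveI hPZ : IsProbabilityMeasure (Measure.map Z P) :=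
    Measure.isProbabilityMeasure_map hZ_meas.aemeasurable
  have hadd_meas : Measurable (fun ω => E ω + Z ω) := hE_meas.add hZ_meas
  haveI : IsProbabilityMeasure (Measure.map (fun ω => E ω + Z ω) P) :=
    Measure.isProbabilityMeasure_map hadd_meas.aemeasurable
  have hprod : Measure.map (fun ω => (E ω, Z ω)) P
      = (Measure.map E P).prod (Measure.map Z P) :=
    (indepFun_iff_map_prod_eq_prod_map_map hE_meas.aemeasurable hZ_meas.aemeasurable).mp
      hEZ_indep
  apply Measure.ext_of_Iic
  intro x
  have hsmeas : MeasurableSet ((fun p : ℝ × ℝ => p.1 + p.2) ⁻¹' Iic x) :=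
    (measurable_fst.add measurable_snd) measurableSet_Iic
  have hLHS : Measure.map (fun ω => E ω + Z ω) P (Iic x)
      = ((Measure.map E P).prod (Measure.map Z P))
        ((fun p : ℝ × ℝ => p.1 + p.2) ⁻¹' Iic x) := by
    rw [← hprod, Measure.map_apply (hE_meas.prodMk hZ_meas) hsmeas,
      Measure.map_apply hadd_meas measurableSet_Iic]
    rfl
  have hset : ∀ t : ℝ,
      (Prod.mk t ⁻¹' ((fun p : ℝ × ℝ => p.1 + p.2) ⁻¹' Iic x)) = Iic (x - t) := by
    intro t
    ext z
    simp only [mem_preimage, mem_Iic]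
    constructor <;> intro h <;> linarith
  have hexpM : expMeasure lam
      = volume.withDensity (fun t => ENNReal.ofReal (exponentialPDFReal lam t)) := rfl
  rw [hLHS, Measure.prod_apply hsmeas]
  calc (∫⁻ t, (Measure.map Z P) (Prod.mk t ⁻¹' ((fun p : ℝ × ℝ => p.1 + p.2) ⁻¹' Iic x))
          ∂(Measure.map E P))
      = ∫⁻ t, ENNReal.ofReal (G (x - t)) ∂(Measure.map E P) :=
        lintegral_congr fun t => by rw [hset t, hZ_law]
    _ = ∫⁻ t, ENNReal.ofReal (exponentialPDFReal lam t) * ENNReal.ofReal (G (x - t)) := by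
        rw [hE_law, hexpM,
          lintegral_withDensity_eq_lintegral_mul_non_measurable volume
            ((measurable_exponentialPDFReal lam).ennreal_ofReal)
            (ae_of_all _ fun t => ENNReal.ofReal_lt_top)]
        rfl
    _ = ∫⁻ t, ENNReal.ofReal (exponentialPDFReal lam t * G (x - t)) :=
        lintegral_congr fun t => (ENNReal.ofReal_mul (hpdf_nonneg t)).symm
    _ = ENNReal.ofReal (∫ t, exponentialPDFReal lam t * G (x - t)) :=
        (ofReal_integral_eq_lintegral_ofReal (hInt x)
          (ae_of_all _ fun t => mul_nonneg (hpdf_nonneg t) (hG_nonneg _))).symm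
    _ = ENNReal.ofReal (F x) := by rw [hreal x]
    _ = ∫⁻ y in Iic x, ENNReal.ofReal (f y) := by
        rw [hF x]
        exact ofReal_integral_eq_lintegral_ofReal hf_integrable.integrableOn
          (ae_of_all _ fun y => hf_nonneg y)
    _ = volume.withDensity (fun y => ENNReal.ofReal (f y)) (Iic x) :=
        (withDensity_apply _ measurableSet_Iic).symm
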